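/- In a local Moufang set with fixed non-equivalent points 0 and ∞ and a fixed μ-map τ, for every unit x we have μ_{-x} = μ_x^{-1}. -/

import Mathlib

open Equiv

structure LocalMoufangSet (X : Type*) where
  r : X → X → Prop
  requiv : Equivalence r
  U : X → Subgroup (Equiv.Perm X)
  preserves : ∀ x : X, ∀ u ∈ U x, ∀ a b : X, r a b ↔ r (u a) (u b)
  big : ∃ a b c : X, ¬ r a b ∧ ¬ r b c ∧ ¬ r a c
  lm1 : ∀ x y : X, r x y → ∀ u ∈ U x, ∃ v ∈ U y, ∀ z : X, r (u z) (v z)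
  lm2_fix : ∀ x : X, ∀ u ∈ U x, u x = x
  lm2_trans : ∀ x y z : X, ¬ r y x → ¬ r z x → ∃! u : Equiv.Perm X, u ∈ U x ∧ u y = z
  lm2'_trans : ∀ x y z : X, ¬ r y x → ¬ r z x → ∃ u ∈ U x, r (u y) z
  lm2'_free : ∀ x : X, ∀ u ∈ U x, ∀ y : X, ¬ r y x → r (u y) y → ∀ z : X, r (u z) z
  lm3 : ∀ x : X, ∀ g ∈ (⨆ y : X, U y : Subgroup (Equiv.Perm X)),
      (U x).map (MulAut.conj g).toMonoidHom = U (g x)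

namespace LocalMoufangSet

variable {X : Type*} (M : LocalMoufangSet X)

/-- The little projective group. -/
def G : Subgroup (Equiv.Perm X) := ⨆ x : X, M.U x

/-- `x` is a unit with respect to the base points `o` (zero) and `ι` (infinity). -/
def IsUnitPt (o ι x : X) : Prop := ¬ M.r x o ∧ ¬ M.r x ι

/-- `μ` is the μ-map of `x`: it lies in the double coset `U_0 α_x U_0` and swaps `o` and `ι`.
(We use the left-action convention: a right product `g α h` corresponds to `h * α * g`.) -/
def IsMuMap (o ι x : X) (μ : Equiv.Perm X) : Prop :=
  μ o = ι ∧ μ ι = o ∧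
    ∃ a ∈ M.U ι, a o = x ∧ ∃ g ∈ M.U o, ∃ h ∈ M.U o, μ = h * a * g

/-- Specialness with respect to a μ-map `τ`: `(-x)τ = -(xτ)` for all units `x`. -/
def Special (o ι : X) (τ : Equiv.Perm X) : Prop :=
  ∀ z : X, IsUnitPt M o ι z → ∀ a ∈ M.U ι, a o = z → ∀ b ∈ M.U ι, b o = τ z →
    τ (a⁻¹ o) = b⁻¹ o

end LocalMoufangSet

/-- Uniqueness of the μ-map of a unit point. -/
lemma mu_unique {X : Type*} (M : LocalMoufangSet X) (o ι : X) (h0 : ¬ M.r o ι)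
    (y : X) (hy : M.IsUnitPt o ι y) {μ₁ μ₂ : Equiv.Perm X}
    (h1 : M.IsMuMap o ι y μ₁) (h2 : M.IsMuMap o ι y μ₂) : μ₁ = μ₂ := by
  obtain ⟨hyo, hyι⟩ := hy
  have hιo : ¬ M.r ι o := fun h => h0 (M.requiv.symm h)
  obtain ⟨hμ1o, hμ1ι, a₁, ha₁U, ha₁o, g₁, hg₁U, hh₁, hh₁U, hdef₁⟩ := h1
  obtain ⟨hμ2o, hμ2ι, a₂, ha₂U, ha₂o, g₂, hg₂U, hh₂, hh₂U, hdef₂⟩ := h2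
  have ha : a₁ = a₂ :=
    (M.lm2_trans ι o y h0 hyι).unique ⟨ha₁U, ha₁o⟩ ⟨ha₂U, ha₂o⟩
  -- the h-parts agree: both send y to ι
  have key_h : ∀ (a g h : Equiv.Perm X), a ∈ M.U ι → a o = y → g ∈ M.U o →
      h ∈ M.U o → (h * a * g) o = ι → h y = ι := by
    intro a g h haU hao hgU hhU heq
    have hgo : g o = o := M.lm2_fix o g hgU
    simpa [Equiv.Perm.mul_apply, hgo, hao] using heq
  have hy1 : hh₁ y = ι := key_h a₁ g₁ hh₁ ha₁U ha₁o hg₁U hh₁U (hdef₁ ▸ hμ1o)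
  have hy2 : hh₂ y = ι := key_h a₂ g₂ hh₂ ha₂U ha₂o hg₂U hh₂U (hdef₂ ▸ hμ2o)
  have hh : hh₁ = hh₂ :=
    (M.lm2_trans o y ι hyo hιo).unique ⟨hh₁U, hy1⟩ ⟨hh₂U, hy2⟩
  -- the g-parts agree: both send ι to a₁⁻¹ o
  have key_g : ∀ (a g h : Equiv.Perm X), a ∈ M.U ι → a o = y → g ∈ M.U o →
      h ∈ M.U o → (h * a * g) ι = o → g ι = a⁻¹ o := by
    intro a g h haU hao hgU hhU heq
    have hho : h o = o := M.lm2_fix o h hhU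
    have : h (a (g ι)) = h o := by
      simpa [Equiv.Perm.mul_apply] using heq.trans hho.symm
    have hago : a (g ι) = o := h.injective this
    have : a (g ι) = a (a⁻¹ o) := by simp [hago]
    exact a.injective this
  have hg1 : g₁ ι = a₁⁻¹ o := key_g a₁ g₁ hh₁ ha₁U ha₁o hg₁U hh₁U (hdef₁ ▸ hμ1ι)
  have hg2 : g₂ ι = a₁⁻¹ o := ha ▸ key_g a₂ g₂ hh₂ ha₂U ha₂o hg₂U hh₂U (hdef₂ ▸ hμ2ι)
  have hnao : ¬ M.r (a₁⁻¹ o) o := by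
    intro h
    have := (M.preserves ι a₁ ha₁U (a₁⁻¹ o) o).mp h
    rw [show a₁ (a₁⁻¹ o) = o from a₁.apply_symm_apply o, ha₁o] at this
    exact hyo (M.requiv.symm this)
  have hg : g₁ = g₂ :=
    (M.lm2_trans o ι (a₁⁻¹ o) hιo hnao).unique ⟨hg₁U, hg1⟩ ⟨hg₂U, hg2⟩
  rw [hdef₁, hdef₂, ha, hh, hg]


/-- `μ_{-x} = μ_x⁻¹`.  Here `-x = α_x⁻¹ o`. -/
theorem stmt4 {X : Type*} (M : LocalMoufangSet X) (o ι : X) (h0 : ¬ M.r o ι)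
    (x : X) (hx : M.IsUnitPt o ι x)
    (α : Equiv.Perm X) (hαU : α ∈ M.U ι) (hαo : α o = x)
    (μ ν : Equiv.Perm X)
    (hμ : M.IsMuMap o ι x μ) (hν : M.IsMuMap o ι (α⁻¹ o) ν) :
    ν = μ⁻¹ := by
  obtain ⟨hxo, hxι⟩ := hx
  have hιo : ¬ M.r ι o := fun h => h0 (M.requiv.symm h)
  -- -x = α⁻¹ o is a unit
  have hαι : α ι = ι := M.lm2_fix ι α hαU
  have hmxo : ¬ M.r (α⁻¹ o) o := by
    intro h
    have := (M.preserves ι α hαU (α⁻¹ o) o).mp h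
    rw [show α (α⁻¹ o) = o from α.apply_symm_apply o, hαo] at this
    exact hxo (M.requiv.symm this)
  have hmxι : ¬ M.r (α⁻¹ o) ι := by
    intro h
    have := (M.preserves ι α hαU (α⁻¹ o) ι).mp h
    rw [show α (α⁻¹ o) = o from α.apply_symm_apply o, hαι] at this
    exact h0 this
  -- μ⁻¹ is a μ-map of α⁻¹ o
  obtain ⟨hμo, hμι, a, haU, hao, g, hgU, h, hhU, hdef⟩ := hμ
  have ha : a = α := (M.lm2_trans ι o x h0 hxι).unique ⟨haU, hao⟩ ⟨hαU, hαo⟩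
  have hinv : M.IsMuMap o ι (α⁻¹ o) μ⁻¹ := by
    refine ⟨?_, ?_, a⁻¹, (M.U ι).inv_mem haU, by rw [ha], h⁻¹, (M.U o).inv_mem hhU,
      g⁻¹, (M.U o).inv_mem hgU, by rw [hdef]; group⟩
    · rw [← hμι, show μ⁻¹ (μ ι) = ι from μ.symm_apply_apply ι]
    · rw [← hμo, show μ⁻¹ (μ o) = o from μ.symm_apply_apply o]
  exact mu_unique M o ι h0 (α⁻¹ o) ⟨hmxo, hmxι⟩ hν hinv
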